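/- The set of squarefree positive integers has natural density 6/π², i.e., the number of squarefree integers up to x is asymptotic to (6/π²)·x as x → ∞. -/

import Mathlib

open Filter Finset ArithmeticFunction
open scoped ArithmeticFunction.Moebius


/-- the "square part root" of n -/
noncomputable def sqPart (n : ℕ) : ℕ :=
  (Finsupp.mapRange (· / 2) (by norm_num) n.factorization).prod (· ^ ·)

lemma sqPart_factorization (n : ℕ) :
    (sqPart n).factorization = Finsupp.mapRange (· / 2) (by norm_num) n.factorization := by
  apply Nat.prod_pow_factorization_eq_self
  intro p hp
  have := Finsupp.support_mapRange (f := fun x => x / 2) (hf := by norm_num)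
      (g := n.factorization) hp
  exact Nat.prime_of_mem_primeFactors (by simpa using this)

lemma sqPart_ne_zero (n : ℕ) : sqPart n ≠ 0 := by
  unfold sqPart
  rw [Finsupp.prod]
  apply Finset.prod_ne_zero_iff.mpr
  intro p hp
  have hpp : p.Prime := Nat.prime_of_mem_primeFactors (by
    simpa using Finsupp.support_mapRange (f := fun x => x / 2) (hf := by norm_num) hp)
  exact pow_ne_zero _ hpp.ne_zero

lemma sq_dvd_iff {n d : ℕ} (hn : n ≠ 0) (hd : d ≠ 0) :
    d ^ 2 ∣ n ↔ d ∣ sqPart n := by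
  rw [← Nat.factorization_le_iff_dvd (pow_ne_zero _ hd) hn,
    ← Nat.factorization_le_iff_dvd hd (sqPart_ne_zero n), sqPart_factorization,
    Nat.factorization_pow]
  constructor
  · intro h p
    simp only [Finsupp.mapRange_apply]
    rw [Nat.le_div_iff_mul_le (by norm_num)]
    have := h p
    simpa [mul_comm] using this
  · intro h p
    have := h p
    simp only [Finsupp.mapRange_apply] at this
    rw [Nat.le_div_iff_mul_le (by norm_num)] at this
    simpa [mul_comm] using this

lemma sqPart_eq_one_iff {n : ℕ} (hn : n ≠ 0) : sqPart n = 1 ↔ Squarefree n := by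
  rw [Nat.squarefree_iff_factorization_le_one hn]
  constructor
  · intro h p
    have := congrArg (fun m => m.factorization p) h
    simp only [Nat.factorization_one, sqPart_factorization, Finsupp.mapRange_apply,
      Finsupp.coe_zero, Pi.zero_apply] at this
    omega
  · intro h
    have h2 : (sqPart n).factorization = 0 := by
      rw [sqPart_factorization]
      ext p
      simp only [Finsupp.mapRange_apply, Finsupp.coe_zero, Pi.zero_apply]
      have := h p
      omega
    have := Nat.factorization_prod_pow_eq_self (sqPart_ne_zero n)
    rw [h2] at this
    simpa using this.symm

lemma key_identity {n : ℕ} (hn : n ≠ 0) :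
    ∑ d ∈ (Finset.Icc 1 n).filter (fun d => d ^ 2 ∣ n), (μ d : ℤ)
      = if Squarefree n then 1 else 0 := by
  have hset : (Finset.Icc 1 n).filter (fun d => d ^ 2 ∣ n) = (sqPart n).divisors := by
    ext d
    simp only [Finset.mem_filter, Finset.mem_Icc, Nat.mem_divisors]
    constructor
    · rintro ⟨⟨h1, _⟩, h2⟩
      exact ⟨(sq_dvd_iff hn (by omega)).mp h2, sqPart_ne_zero n⟩
    · rintro ⟨h1, -⟩
      have hd : d ≠ 0 := by
        rintro rfl
        exact sqPart_ne_zero n (Nat.eq_zero_of_zero_dvd h1)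
      have h2 : d ^ 2 ∣ n := (sq_dvd_iff hn hd).mpr h1
      refine ⟨⟨by omega, ?_⟩, h2⟩
      calc d ≤ d ^ 2 := Nat.le_self_pow two_ne_zero d
        _ ≤ n := Nat.le_of_dvd (Nat.pos_of_ne_zero hn) h2
  rw [hset]
  have := congrArg (fun f : ArithmeticFunction ℤ => f (sqPart n)) moebius_mul_coe_zeta
  simp only [coe_mul_zeta_apply, one_apply] at this
  rw [this]
  exact if_congr (sqPart_eq_one_iff hn) rfl rfl

lemma count_squarefree (N : ℕ) :
    ((((Finset.Icc 1 N).filter (fun n => Squarefree n)).card : ℤ))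
      = ∑ d ∈ Finset.Icc 1 N, (μ d : ℤ) * (N / d ^ 2 : ℕ) := by
  have h1 : ((((Finset.Icc 1 N).filter (fun n => Squarefree n)).card : ℤ))
      = ∑ n ∈ Finset.Icc 1 N, if Squarefree n then (1 : ℤ) else 0 := by
    rw [Finset.sum_boole]
  rw [h1]
  have h2 : ∀ n ∈ Finset.Icc 1 N, (if Squarefree n then (1 : ℤ) else 0)
      = ∑ d ∈ Finset.Icc 1 N, if d ^ 2 ∣ n then (μ d : ℤ) else 0 := by
    intro n hn
    simp only [Finset.mem_Icc] at hn
    rw [← Finset.sum_filter, ← key_identity (by omega : n ≠ 0)]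
    congr 1
    ext d
    simp only [Finset.mem_filter, Finset.mem_Icc]
    constructor
    · rintro ⟨⟨hd1, hd2⟩, hd3⟩
      exact ⟨⟨hd1, le_trans (le_trans (Nat.le_self_pow two_ne_zero d)
        (Nat.le_of_dvd (by omega) hd3)) hn.2⟩, hd3⟩
    · rintro ⟨⟨hd1, hd2⟩, hd3⟩
      exact ⟨⟨hd1, le_trans (Nat.le_self_pow two_ne_zero d)
        (Nat.le_of_dvd (by omega) hd3)⟩, hd3⟩
  rw [Finset.sum_congr rfl h2, Finset.sum_comm]
  refine Finset.sum_congr rfl fun d _ => ?_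
  rw [← Finset.sum_filter]
  have hIcc : Finset.Icc 1 N = Finset.Ioc 0 N := by rw [← Finset.Icc_add_one_left_eq_Ioc, zero_add]
  rw [Finset.sum_const, hIcc, Nat.Ioc_filter_dvd_card_eq_div, nsmul_eq_mul]
  push_cast
  ring


lemma summable_moebius_div_sq : Summable (fun d : ℕ => (μ d : ℝ) / d ^ 2) := by
  have hb : Summable (fun d : ℕ => 1 / (d : ℝ) ^ 2) :=
    Real.summable_one_div_nat_pow.mpr one_lt_two
  have h1 : ∀ d : ℕ, |(μ d : ℝ) / d ^ 2| ≤ 1 / (d : ℝ) ^ 2 := by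
    intro d
    rcases eq_or_ne d 0 with rfl | hd
    · simp
    · rw [abs_div, abs_pow, Nat.abs_cast]
      gcongr
      exact_mod_cast abs_moebius_le_one
  exact Summable.of_abs (hb.of_nonneg_of_le (fun d => abs_nonneg _) h1)

lemma tsum_moebius_div_sq : ∑' d : ℕ, (μ d : ℝ) / d ^ 2 = 6 / Real.pi ^ 2 := by
  have hsum := summable_moebius_div_sq
  have hC : ((∑' d : ℕ, (μ d : ℝ) / d ^ 2 : ℝ) : ℂ) = LSeries (fun n => (μ n : ℂ)) 2 := by
    rw [Complex.ofReal_tsum]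
    unfold LSeries
    congr 1
    ext n
    rcases eq_or_ne n 0 with rfl | hn
    · simp [LSeries.term]
    · rw [LSeries.term_of_ne_zero hn]
      push_cast
      rw [show (2 : ℂ) = ((2 : ℕ) : ℂ) by norm_num, Complex.cpow_natCast]
  have h2 : (1 : ℝ) < (2 : ℂ).re := by norm_num
  have hz : LSeries (fun n => (μ n : ℂ)) 2 = 1 / riemannZeta 2 := by
    have h := ArithmeticFunction.LSeries_zeta_mul_Lseries_moebius h2
    rw [ArithmeticFunction.LSeries_zeta_eq_riemannZeta h2] at h
    rw [mul_comm] at h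
    exact eq_one_div_of_mul_eq_one_left h
  have hzeta : riemannZeta 2 = (Real.pi : ℂ) ^ 2 / 6 := riemannZeta_two
  have : ((∑' d : ℕ, (μ d : ℝ) / d ^ 2 : ℝ) : ℂ) = ((6 / Real.pi ^ 2 : ℝ) : ℂ) := by
    rw [hC, hz, hzeta]
    push_cast
    rw [div_div_eq_mul_div, one_mul]
  exact_mod_cast this


theorem squarefree_density :
    Tendsto (fun x : ℝ =>
        (((Finset.Icc 1 ⌊x⌋₊).filter (fun n => Squarefree n)).card : ℝ) / x)
      atTop (nhds (6 / Real.pi ^ 2)) := by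
  set f : ℝ → ℝ := fun x =>
    (((Finset.Icc 1 ⌊x⌋₊).filter (fun n => Squarefree n)).card : ℝ) / x with hf
  set g : ℝ → ℝ := fun x =>
    ∑ d ∈ Finset.range (Nat.sqrt ⌊x⌋₊ + 1), (μ d : ℝ) / d ^ 2 with hgdef
  -- g tends to the limit
  have hg : Tendsto g atTop (nhds (6 / Real.pi ^ 2)) := by
    have hps : Tendsto (fun n : ℕ => ∑ d ∈ Finset.range n, (μ d : ℝ) / d ^ 2)
        atTop (nhds (6 / Real.pi ^ 2)) := by
      rw [← tsum_moebius_div_sq]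
      exact summable_moebius_div_sq.hasSum.tendsto_sum_nat
    have hsqrt : Tendsto Nat.sqrt atTop atTop :=
      tendsto_atTop_atTop.mpr fun b => ⟨b * b, fun n hn => Nat.le_sqrt.mpr hn⟩
    have hK : Tendsto (fun x : ℝ => Nat.sqrt ⌊x⌋₊ + 1) atTop atTop :=
      (tendsto_add_atTop_nat 1).comp (hsqrt.comp tendsto_nat_floor_atTop)
    exact hps.comp hK
  -- error bound
  have herr : Tendsto (fun x => f x - g x) atTop (nhds 0) := by
    have hsqrtR : Tendsto Real.sqrt atTop atTop :=
      tendsto_atTop_atTop.mpr fun b => ⟨b ^ 2, fun a ha => Real.le_sqrt_of_sq_le ha⟩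
    have hbnd : Tendsto (fun x : ℝ => 2 / Real.sqrt x) atTop (nhds 0) :=
      Tendsto.div_atTop tendsto_const_nhds hsqrtR
    apply squeeze_zero_norm' ?_ hbnd
    filter_upwards [eventually_ge_atTop (1 : ℝ)] with x hx
    have hx0 : (0 : ℝ) < x := by linarith
    set N := ⌊x⌋₊ with hN
    set K := Nat.sqrt N with hK
    have hN1 : 1 ≤ N := Nat.le_floor (by exact_mod_cast hx)
    have hxN : (N : ℝ) ≤ x := Nat.floor_le (by linarith)
    have hNx : x < N + 1 := Nat.lt_floor_add_one x
    -- card identity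
    have hS : (((Finset.Icc 1 N).filter (fun n => Squarefree n)).card : ℝ)
        = ∑ d ∈ Finset.Icc 1 N, (μ d : ℝ) * ((N / d ^ 2 : ℕ) : ℝ) := by
      have h := count_squarefree N
      calc (((Finset.Icc 1 N).filter (fun n => Squarefree n)).card : ℝ)
          = ((((Finset.Icc 1 N).filter (fun n => Squarefree n)).card : ℤ) : ℝ) := by
            push_cast; ring
        _ = ((∑ d ∈ Finset.Icc 1 N, (μ d : ℤ) * (N / d ^ 2 : ℕ) : ℤ) : ℝ) := by rw [h]
        _ = ∑ d ∈ Finset.Icc 1 N, (μ d : ℝ) * ((N / d ^ 2 : ℕ) : ℝ) := by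
            rw [Int.cast_sum]
            exact Finset.sum_congr rfl fun d _ => by
              rw [Int.cast_mul, Int.cast_natCast]
    -- restrict to Icc 1 K
    have hsub : Finset.Icc 1 K ⊆ Finset.Icc 1 N := by
      apply Finset.Icc_subset_Icc le_rfl (Nat.sqrt_le_self N)
    have hS2 : (((Finset.Icc 1 N).filter (fun n => Squarefree n)).card : ℝ)
        = ∑ d ∈ Finset.Icc 1 K, (μ d : ℝ) * ((N / d ^ 2 : ℕ) : ℝ) := by
      rw [hS]
      apply (Finset.sum_subset hsub ?_).symm
      intro d hd hd'
      simp only [Finset.mem_Icc] at hd hd'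
      have : K < d := by omega
      have : N < d ^ 2 := Nat.sqrt_lt'.mp this
      rw [Nat.div_eq_of_lt this]
      simp
    -- rewrite g as sum over Icc 1 K
    have hg2 : g x = ∑ d ∈ Finset.Icc 1 K, (μ d : ℝ) / d ^ 2 := by
      rw [hgdef]
      simp only [← hN, ← hK]
      apply (Finset.sum_subset ?_ ?_).symm
      · intro d hd
        simp only [Finset.mem_Icc] at hd
        simp only [Finset.mem_range]
        omega
      · intro d hd hd'
        simp only [Finset.mem_range] at hd
        simp only [Finset.mem_Icc] at hd'
        have : d = 0 := by omega
        simp [this]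
    have hfx : f x = ∑ d ∈ Finset.Icc 1 K, (μ d : ℝ) * ((N / d ^ 2 : ℕ) : ℝ) / x := by
      rw [hf]
      simp only
      rw [← hN, hS2, Finset.sum_div]
    rw [hfx, hg2, ← Finset.sum_sub_distrib]
    -- termwise bound
    have hterm : ∀ d ∈ Finset.Icc 1 K,
        |(μ d : ℝ) * ((N / d ^ 2 : ℕ) : ℝ) / x - (μ d : ℝ) / d ^ 2| ≤ 2 / x := by
      intro d hd
      simp only [Finset.mem_Icc] at hd
      have hd1 : (1 : ℝ) ≤ (d : ℝ) ^ 2 := by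
        have : 1 ≤ d := hd.1
        have : (1 : ℝ) ≤ (d : ℝ) := by exact_mod_cast this
        nlinarith
      have hd2 : (0 : ℝ) < (d : ℝ) ^ 2 := by linarith
      set q : ℝ := ((N / d ^ 2 : ℕ) : ℝ) with hq
      have hq0 : 0 ≤ q := Nat.cast_nonneg _
      have i1 : q * (d : ℝ) ^ 2 ≤ (N : ℝ) := by
        have := Nat.div_mul_le_self N (d ^ 2)
        calc q * (d : ℝ) ^ 2 = ((N / d ^ 2 * d ^ 2 : ℕ) : ℝ) := by push_cast; ring
          _ ≤ (N : ℝ) := by exact_mod_cast this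
      have i2 : (N : ℝ) < (d : ℝ) ^ 2 * q + (d : ℝ) ^ 2 := by
        have hpos : 0 < d ^ 2 := pow_pos hd.1 2
        have h1 : N < d ^ 2 * (N / d ^ 2) + d ^ 2 := by
          conv_lhs => rw [← Nat.div_add_mod N (d ^ 2)]
          exact Nat.add_lt_add_left (Nat.mod_lt _ hpos) _
        calc (N : ℝ) < ((d ^ 2 * (N / d ^ 2) + d ^ 2 : ℕ) : ℝ) := by exact_mod_cast h1
          _ = (d : ℝ) ^ 2 * q + (d : ℝ) ^ 2 := by push_cast; ring
      -- q ≤ x / d^2 and x / d^2 ≤ q + 2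
      have j1 : q ≤ x / (d : ℝ) ^ 2 := by
        rw [le_div_iff₀ hd2]
        linarith
      have j2 : x / (d : ℝ) ^ 2 ≤ q + 2 := by
        rw [div_le_iff₀ hd2]
        nlinarith
      have key : |q / x - 1 / (d : ℝ) ^ 2| ≤ 2 / x := by
        have e : (q - x / (d : ℝ) ^ 2) / x = q / x - 1 / (d : ℝ) ^ 2 := by
          rw [sub_div, div_div, mul_comm, ← div_div, div_self (ne_of_gt hx0)]
        rw [← e, abs_div, abs_of_pos hx0]
        gcongr
        rw [abs_le]
        constructor <;> linarith
      calc |(μ d : ℝ) * q / x - (μ d : ℝ) / d ^ 2|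
          = |(μ d : ℝ)| * |q / x - 1 / (d : ℝ) ^ 2| := by
            rw [← abs_mul]; congr 1; ring
        _ ≤ 1 * (2 / x) := by
            apply mul_le_mul ?_ key (abs_nonneg _) zero_le_one
            exact_mod_cast abs_moebius_le_one
        _ = 2 / x := one_mul _
    calc ‖∑ d ∈ Finset.Icc 1 K, ((μ d : ℝ) * ((N / d ^ 2 : ℕ) : ℝ) / x - (μ d : ℝ) / d ^ 2)‖
        ≤ ∑ d ∈ Finset.Icc 1 K, (2 / x) := by
          refine (norm_sum_le _ _).trans (Finset.sum_le_sum ?_)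
          intro d hd
          exact (hterm d hd)
      _ = K * (2 / x) := by
          rw [Finset.sum_const, Nat.card_Icc]
          simp [nsmul_eq_mul]
      _ ≤ Real.sqrt x * (2 / x) := by
          apply mul_le_mul_of_nonneg_right ?_ (by positivity)
          apply Real.le_sqrt_of_sq_le
          calc ((K : ℝ)) ^ 2 = ((K ^ 2 : ℕ) : ℝ) := by push_cast; ring
            _ ≤ (N : ℝ) := by exact_mod_cast Nat.sqrt_le' N
            _ ≤ x := hxN
      _ = 2 / Real.sqrt x := by
          have hxx : Real.sqrt x * Real.sqrt x = x := Real.mul_self_sqrt hx0.le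
          have hs0 : Real.sqrt x ≠ 0 := by positivity
          field_simp
          nlinarith [hxx]
  have := herr.add hg
  rw [zero_add] at this
  convert this using 2 with x
  ring
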